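/- For every N ∈ ℕ with N ≥ 1, every p > 0 and every μ ∈ ℝ, the partition function admits the integral representation Ξ_N(p,μ) = √(N/(2πp)) · ∫_ℝ exp(N·E(y,p,μ)) dy; in particular both the sum defining Ξ_N and the integral are finite. -/

import Mathlib

open Real MeasureTheory

lemma gauss_integrable {γ : ℝ} (hγ : 0 < γ) (s : ℝ) :
    Integrable (fun y : ℝ => Real.exp (-γ * y ^ 2 + s * y)) := by
  have h : (fun y : ℝ => Real.exp (-γ * y ^ 2 + s * y))
      = fun y => Real.exp (s ^ 2 / (4 * γ)) * Real.exp (-γ * (y - s / (2 * γ)) ^ 2) := by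
    funext y
    rw [← Real.exp_add]
    congr 1
    field_simp
    ring
  rw [h]
  exact (((integrable_exp_neg_mul_sq hγ).comp_sub_right (s / (2 * γ)))).const_mul _

lemma gauss_integral {γ : ℝ} (hγ : 0 < γ) (s : ℝ) :
    ∫ y : ℝ, Real.exp (-γ * y ^ 2 + s * y)
      = Real.sqrt (π / γ) * Real.exp (s ^ 2 / (4 * γ)) := by
  have h : (fun y : ℝ => Real.exp (-γ * y ^ 2 + s * y))
      = fun y => Real.exp (s ^ 2 / (4 * γ)) * Real.exp (-γ * (y - s / (2 * γ)) ^ 2) := by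
    funext y
    rw [← Real.exp_add]
    congr 1
    field_simp
    ring
  rw [h, MeasureTheory.integral_const_mul,
    integral_sub_right_eq_self (μ := volume) (fun y : ℝ => Real.exp (-γ * y ^ 2)) (s / (2 * γ)),
    integral_gaussian]
  ring

lemma summable_prod_pi {g : ℕ → ℝ} (hg : Summable g) (hg0 : ∀ n, 0 ≤ g n) (N : ℕ) :
    Summable (fun ρ : Fin N → ℕ => ∏ ℓ, g (ρ ℓ)) ∧
      (∑' ρ : Fin N → ℕ, ∏ ℓ, g (ρ ℓ)) = (∑' n, g n) ^ N := by
  induction N with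
  | zero =>
    constructor
    · exact Summable.of_finite
    · rw [tsum_eq_single (fun i => 0) (by intro b hb; exact absurd (Subsingleton.elim b _) hb)]
      simp
  | succ n ih =>
    let e : (ℕ × (Fin n → ℕ)) ≃ (Fin (n + 1) → ℕ) := Fin.consEquiv fun _ => ℕ
    have hF2 : Summable (fun z : ℕ × (Fin n → ℕ) => g z.1 * ∏ ℓ, g (z.2 ℓ)) :=
      Summable.mul_of_nonneg (f := g) (g := fun ρ : Fin n → ℕ => ∏ ℓ, g (ρ ℓ))
        hg ih.1 (fun x => hg0 x) (fun ρ => Finset.prod_nonneg fun ℓ _ => hg0 _)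
    have hcomp : (fun ρ : Fin (n + 1) → ℕ => ∏ ℓ, g (ρ ℓ)) ∘ e
        = fun z : ℕ × (Fin n → ℕ) => g z.1 * ∏ ℓ, g (z.2 ℓ) := by
      funext z
      simp [e, Fin.consEquiv, Fin.prod_univ_succ]
    have hs : Summable (fun ρ : Fin (n + 1) → ℕ => ∏ ℓ, g (ρ ℓ)) :=
      e.summable_iff.mp (hcomp ▸ hF2)
    refine ⟨hs, ?_⟩
    have ht := e.tsum_eq (fun ρ : Fin (n + 1) → ℕ => ∏ ℓ, g (ρ ℓ))
    rw [← ht]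
    have : (∑' z : ℕ × (Fin n → ℕ), (fun ρ : Fin (n + 1) → ℕ => ∏ ℓ, g (ρ ℓ)) (e z))
        = ∑' z : ℕ × (Fin n → ℕ), g z.1 * ∏ ℓ, g (z.2 ℓ) := by
      exact tsum_congr fun z => congrFun hcomp z
    rw [this,
      ← Summable.tsum_mul_tsum (f := g) (g := fun ρ : Fin n → ℕ => ∏ ℓ, g (ρ ℓ)) hg ih.1 hF2,
      ih.2, pow_succ]
    ring

lemma summable_expquad {υ : ℝ} (hυ : 0 < υ) {c : ℝ} (hc : 0 ≤ c) (x : ℝ) :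
    Summable (fun n : ℕ => υ ^ n / (Nat.factorial n : ℝ) * Real.exp (x * n - c * (n : ℝ) ^ 2)) := by
  refine Summable.of_nonneg_of_le (fun n => by positivity) (fun n => ?_)
    (Real.summable_pow_div_factorial (υ * Real.exp x))
  have h1 : Real.exp (x * n - c * (n : ℝ) ^ 2) ≤ Real.exp (x * n) := by
    apply Real.exp_le_exp.mpr
    nlinarith [sq_nonneg (n : ℝ), mul_nonneg hc (sq_nonneg (n : ℝ))]
  calc υ ^ n / (Nat.factorial n : ℝ) * Real.exp (x * n - c * (n : ℝ) ^ 2)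
      ≤ υ ^ n / (Nat.factorial n : ℝ) * Real.exp (x * n) := by
        apply mul_le_mul_of_nonneg_left h1 (by positivity)
    _ = (υ * Real.exp x) ^ n / (Nat.factorial n : ℝ) := by
        rw [mul_pow, mul_comm x (n : ℝ), Real.exp_nat_mul]
        ring

/-- The single-cell partition function `K(y,p,μ)` with cell volume `υ` and ratio `a`. -/
noncomputable def K (υ a y p μ : ℝ) : ℝ :=
  ∑' n : ℕ, (υ ^ n / (Nat.factorial n : ℝ)) *
    Real.exp ((y + μ) * n - (a * p / 2) * (n : ℝ) ^ 2)

/-- The function `E(y,p,μ) = -y²/(2p) + ln K(y,p,μ)`. -/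
noncomputable def E (υ a y p μ : ℝ) : ℝ :=
  -(y ^ 2) / (2 * p) + Real.log (K υ a y p μ)


/-- The weight `π(n,μ)` of occupation number `n`. -/
noncomputable def ppi (υ a p μ : ℝ) (n : ℕ) : ℝ :=
  (υ ^ n / (Nat.factorial n : ℝ)) * Real.exp (μ * n - (a * p / 2) * (n : ℝ) ^ 2)

/-- The grand canonical partition function `Ξ_N(p,μ)`. -/
noncomputable def Xi (υ a : ℝ) (N : ℕ) (p μ : ℝ) : ℝ :=
  ∑' ρ : Fin N → ℕ, Real.exp ((p / (2 * N)) * (∑ ℓ, (ρ ℓ : ℝ)) ^ 2) *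
    ∏ ℓ, ppi υ a p μ (ρ ℓ)

/-- The finite-volume pressure `P_N(p,μ)`. -/
noncomputable def Pfin (υ a : ℝ) (N : ℕ) (p μ : ℝ) : ℝ :=
  (1 / (υ * N)) * Real.log (Xi υ a N p μ)


theorem stmt_5 (υ a : ℝ) (hυ : 0 < υ) (ha : 1 < a) (N : ℕ) (hN : 1 ≤ N)
    (p μ : ℝ) (hp : 0 < p) :
    Summable (fun ρ : Fin N → ℕ =>
      Real.exp ((p / (2 * N)) * (∑ ℓ, (ρ ℓ : ℝ)) ^ 2) * ∏ ℓ, ppi υ a p μ (ρ ℓ)) ∧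
    MeasureTheory.Integrable (fun y : ℝ => Real.exp (N * E υ a y p μ)) ∧
    Xi υ a N p μ =
      Real.sqrt (N / (2 * Real.pi * p)) * ∫ y : ℝ, Real.exp (N * E υ a y p μ) := by
  have hN0 : (0 : ℝ) < N := by exact_mod_cast Nat.pos_of_ne_zero (by omega)
  have hNne : (N : ℝ) ≠ 0 := ne_of_gt hN0
  have hc : (0 : ℝ) < a * p / 2 := by nlinarith
  have hppi0 : ∀ n, 0 ≤ ppi υ a p μ n := fun n => by
    unfold ppi; positivity
  -- the dominating summable sequence g
  set g : ℕ → ℝ := fun n => ppi υ a p μ n * Real.exp ((p / 2) * (n : ℝ) ^ 2) with hgdef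
  have hg_eq : g = fun n : ℕ =>
      υ ^ n / (Nat.factorial n : ℝ) * Real.exp (μ * n - ((a - 1) * p / 2) * (n : ℝ) ^ 2) := by
    funext n
    show ppi υ a p μ n * Real.exp ((p / 2) * (n : ℝ) ^ 2) = _
    unfold ppi
    rw [mul_assoc, ← Real.exp_add]
    congr 2
    ring
  have hg : Summable g := by
    rw [hg_eq]
    exact summable_expquad hυ (by nlinarith) μ
  have hg0 : ∀ n, 0 ≤ g n := fun n =>
    mul_nonneg (hppi0 n) (Real.exp_nonneg _)
  -- Part 1 : summability of the Xi summand
  have hT0 : ∀ ρ : Fin N → ℕ,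
      0 ≤ Real.exp ((p / (2 * N)) * (∑ ℓ, (ρ ℓ : ℝ)) ^ 2) * ∏ ℓ, ppi υ a p μ (ρ ℓ) :=
    fun ρ => mul_nonneg (Real.exp_nonneg _) (Finset.prod_nonneg fun ℓ _ => hppi0 _)
  have hTle : ∀ ρ : Fin N → ℕ,
      Real.exp ((p / (2 * N)) * (∑ ℓ, (ρ ℓ : ℝ)) ^ 2) * ∏ ℓ, ppi υ a p μ (ρ ℓ)
        ≤ ∏ ℓ, g (ρ ℓ) := by
    intro ρ
    have h1 : (∑ ℓ, (ρ ℓ : ℝ)) ^ 2 ≤ (N : ℝ) * ∑ ℓ, (ρ ℓ : ℝ) ^ 2 := by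
      have := sq_sum_le_card_mul_sum_sq (s := (Finset.univ : Finset (Fin N)))
        (f := fun ℓ => (ρ ℓ : ℝ))
      simpa using this
    have h2 : (p / (2 * N)) * (∑ ℓ, (ρ ℓ : ℝ)) ^ 2 ≤ (p / 2) * ∑ ℓ, (ρ ℓ : ℝ) ^ 2 := by
      have := mul_le_mul_of_nonneg_left h1 (le_of_lt (by positivity : (0:ℝ) < p / (2 * N)))
      calc (p / (2 * N)) * (∑ ℓ, (ρ ℓ : ℝ)) ^ 2
          ≤ (p / (2 * N)) * ((N : ℝ) * ∑ ℓ, (ρ ℓ : ℝ) ^ 2) := this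
        _ = (p / 2) * ∑ ℓ, (ρ ℓ : ℝ) ^ 2 := by field_simp
    calc Real.exp ((p / (2 * N)) * (∑ ℓ, (ρ ℓ : ℝ)) ^ 2) * ∏ ℓ, ppi υ a p μ (ρ ℓ)
        ≤ Real.exp ((p / 2) * ∑ ℓ, (ρ ℓ : ℝ) ^ 2) * ∏ ℓ, ppi υ a p μ (ρ ℓ) :=
          mul_le_mul_of_nonneg_right (Real.exp_le_exp.mpr h2)
            (Finset.prod_nonneg fun ℓ _ => hppi0 _)
      _ = ∏ ℓ, g (ρ ℓ) := by
          rw [hgdef, Finset.prod_mul_distrib, ← Real.exp_sum, Finset.mul_sum]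
          ring
  have hsum1 : Summable (fun ρ : Fin N → ℕ =>
      Real.exp ((p / (2 * N)) * (∑ ℓ, (ρ ℓ : ℝ)) ^ 2) * ∏ ℓ, ppi υ a p μ (ρ ℓ)) :=
    Summable.of_nonneg_of_le hT0 hTle (summable_prod_pi hg hg0 N).1
  refine ⟨hsum1, ?_⟩
  -- the per-y summand of K in terms of ppi
  have hfy_eq : ∀ y : ℝ, (fun n : ℕ => ppi υ a p μ n * Real.exp (y * n))
      = fun n : ℕ => υ ^ n / (Nat.factorial n : ℝ) *
          Real.exp ((y + μ) * n - (a * p / 2) * (n : ℝ) ^ 2) := by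
    intro y
    funext n
    unfold ppi
    rw [mul_assoc, ← Real.exp_add]
    congr 2
    ring
  have hfy : ∀ y : ℝ, Summable (fun n : ℕ => ppi υ a p μ n * Real.exp (y * n)) := by
    intro y
    rw [hfy_eq y]
    exact summable_expquad hυ hc.le (y + μ)
  have hK_eq : ∀ y : ℝ, K υ a y p μ = ∑' n : ℕ, ppi υ a p μ n * Real.exp (y * n) := by
    intro y
    unfold K
    rw [hfy_eq y]
  have hfy0 : ∀ y : ℝ, ∀ n : ℕ, 0 ≤ ppi υ a p μ n * Real.exp (y * n) :=
    fun y n => mul_nonneg (hppi0 n) (Real.exp_nonneg _)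
  have hK1 : ∀ y : ℝ, 1 ≤ K υ a y p μ := by
    intro y
    rw [hK_eq y]
    have := Summable.le_tsum (hfy y) 0 (fun i _ => hfy0 y i)
    simpa [ppi] using this
  have hKpos : ∀ y : ℝ, 0 < K υ a y p μ := fun y => lt_of_lt_of_le one_pos (hK1 y)
  -- exp (N E) as exp(-γ y²) * K^N
  have hNE : ∀ y : ℝ, Real.exp (N * E υ a y p μ)
      = Real.exp (-((N : ℝ) / (2 * p)) * y ^ 2) * (K υ a y p μ) ^ N := by
    intro y
    unfold E
    rw [mul_add, Real.exp_add]
    congr 1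
    · congr 1
      ring
    · rw [Real.exp_nat_mul, Real.exp_log (hKpos y)]
  -- pointwise tsum representation
  have hNE2 : ∀ y : ℝ, Real.exp (N * E υ a y p μ)
      = ∑' ρ : Fin N → ℕ, (∏ ℓ, ppi υ a p μ (ρ ℓ)) *
          Real.exp (-((N : ℝ) / (2 * p)) * y ^ 2 + (∑ ℓ, (ρ ℓ : ℝ)) * y) := by
    intro y
    rw [hNE y, hK_eq y, ← (summable_prod_pi (hfy y) (hfy0 y) N).2, ← tsum_mul_left]
    refine tsum_congr fun ρ => ?_
    rw [Finset.prod_mul_distrib, ← Real.exp_sum]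
    have hsum : (∑ x, y * (ρ x : ℝ)) = (∑ ℓ, (ρ ℓ : ℝ)) * y := by
      rw [Finset.sum_mul]
      exact Finset.sum_congr rfl fun ℓ _ => mul_comm _ _
    rw [hsum, Real.exp_add]
    ring
  have hγ : (0 : ℝ) < (N : ℝ) / (2 * p) := by positivity
  -- integrability and value for each ρ
  have hFint : ∀ ρ : Fin N → ℕ, Integrable (fun y : ℝ =>
      (∏ ℓ, ppi υ a p μ (ρ ℓ)) *
        Real.exp (-((N : ℝ) / (2 * p)) * y ^ 2 + (∑ ℓ, (ρ ℓ : ℝ)) * y)) :=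
    fun ρ => (gauss_integrable hγ _).const_mul _
  have hexp4 : ∀ ρ : Fin N → ℕ,
      (∑ ℓ, (ρ ℓ : ℝ)) ^ 2 / (4 * ((N : ℝ) / (2 * p)))
        = (p / (2 * N)) * (∑ ℓ, (ρ ℓ : ℝ)) ^ 2 := by
    intro ρ
    field_simp
    ring
  have hFval : ∀ ρ : Fin N → ℕ,
      (∫ y : ℝ, (∏ ℓ, ppi υ a p μ (ρ ℓ)) *
          Real.exp (-((N : ℝ) / (2 * p)) * y ^ 2 + (∑ ℓ, (ρ ℓ : ℝ)) * y))
        = Real.sqrt (π / ((N : ℝ) / (2 * p))) *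
            (Real.exp ((p / (2 * N)) * (∑ ℓ, (ρ ℓ : ℝ)) ^ 2) * ∏ ℓ, ppi υ a p μ (ρ ℓ)) := by
    intro ρ
    rw [MeasureTheory.integral_const_mul, gauss_integral hγ, hexp4 ρ]
    ring
  have hFnorm : ∀ ρ : Fin N → ℕ,
      (∫ y : ℝ, ‖(∏ ℓ, ppi υ a p μ (ρ ℓ)) *
          Real.exp (-((N : ℝ) / (2 * p)) * y ^ 2 + (∑ ℓ, (ρ ℓ : ℝ)) * y)‖)
        = ∫ y : ℝ, (∏ ℓ, ppi υ a p μ (ρ ℓ)) *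
            Real.exp (-((N : ℝ) / (2 * p)) * y ^ 2 + (∑ ℓ, (ρ ℓ : ℝ)) * y) := by
    intro ρ
    congr 1
    funext y
    exact Real.norm_of_nonneg
      (mul_nonneg (Finset.prod_nonneg fun ℓ _ => hppi0 _) (Real.exp_nonneg _))
  have hsumnorm : Summable (fun ρ : Fin N → ℕ =>
      ∫ y : ℝ, ‖(∏ ℓ, ppi υ a p μ (ρ ℓ)) *
          Real.exp (-((N : ℝ) / (2 * p)) * y ^ 2 + (∑ ℓ, (ρ ℓ : ℝ)) * y)‖) := by
    have : (fun ρ : Fin N → ℕ =>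
        ∫ y : ℝ, ‖(∏ ℓ, ppi υ a p μ (ρ ℓ)) *
            Real.exp (-((N : ℝ) / (2 * p)) * y ^ 2 + (∑ ℓ, (ρ ℓ : ℝ)) * y)‖)
        = fun ρ : Fin N → ℕ => Real.sqrt (π / ((N : ℝ) / (2 * p))) *
            (Real.exp ((p / (2 * N)) * (∑ ℓ, (ρ ℓ : ℝ)) ^ 2) * ∏ ℓ, ppi υ a p μ (ρ ℓ)) := by
      funext ρ
      rw [hFnorm ρ, hFval ρ]
    rw [this]
    exact hsum1.mul_left _
  -- the swap
  have hswap := integral_tsum_of_summable_integral_norm hFint hsumnorm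
  -- measurability of exp (N E ·)
  have hKm : Measurable (fun y : ℝ => K υ a y p μ) := by
    apply measurable_of_tendsto_metrizable
      (f := fun m : ℕ => fun y : ℝ => ∑ n ∈ Finset.range m,
        υ ^ n / (Nat.factorial n : ℝ) * Real.exp ((y + μ) * n - (a * p / 2) * (n : ℝ) ^ 2))
    · intro m
      apply Finset.measurable_sum
      intro n _
      fun_prop
    · rw [tendsto_pi_nhds]
      intro y
      exact (summable_expquad hυ hc.le (y + μ)).hasSum.tendsto_sum_nat
  have hEm : Measurable (fun y : ℝ => Real.exp (N * E υ a y p μ)) := by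
    apply Measurable.exp
    apply Measurable.const_mul
    unfold E
    exact ((((measurable_id'.pow_const 2).neg).div_const _).add (hKm.log))
  -- domination
  set c' : ℝ := (a + 1) * p / 4 with hc'def
  have hc' : 0 < c' := by rw [hc'def]; nlinarith
  have hc'le : c' ≤ a * p / 2 := by rw [hc'def]; nlinarith
  set M : ℝ := ∑' n : ℕ, υ ^ n / (Nat.factorial n : ℝ) with hMdef
  have hMsum : Summable (fun n : ℕ => υ ^ n / (Nat.factorial n : ℝ)) :=
    Real.summable_pow_div_factorial υ
  have hM0 : 0 ≤ M := tsum_nonneg fun n => by positivity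
  have hKle : ∀ y : ℝ, K υ a y p μ ≤ Real.exp ((y + μ) ^ 2 / (4 * c')) * M := by
    intro y
    have hterm : ∀ n : ℕ,
        υ ^ n / (Nat.factorial n : ℝ) * Real.exp ((y + μ) * n - (a * p / 2) * (n : ℝ) ^ 2)
          ≤ υ ^ n / (Nat.factorial n : ℝ) * Real.exp ((y + μ) ^ 2 / (4 * c')) := by
      intro n
      apply mul_le_mul_of_nonneg_left _ (by positivity)
      apply Real.exp_le_exp.mpr
      have h1 : (y + μ) * n - c' * (n : ℝ) ^ 2 ≤ (y + μ) ^ 2 / (4 * c') := by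
        rw [le_div_iff₀ (by positivity : (0:ℝ) < 4 * c')]
        nlinarith [sq_nonneg (2 * c' * (n : ℝ) - (y + μ))]
      nlinarith [sq_nonneg (n : ℝ), mul_le_mul_of_nonneg_right hc'le (sq_nonneg (n : ℝ))]
    have hrs : Summable (fun n : ℕ =>
        υ ^ n / (Nat.factorial n : ℝ) * Real.exp ((y + μ) ^ 2 / (4 * c'))) :=
      hMsum.mul_right _
    calc K υ a y p μ ≤ ∑' n : ℕ, υ ^ n / (Nat.factorial n : ℝ) *
          Real.exp ((y + μ) ^ 2 / (4 * c')) := by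
          unfold K
          exact Summable.tsum_le_tsum hterm (summable_expquad hυ hc.le (y + μ)) hrs
      _ = Real.exp ((y + μ) ^ 2 / (4 * c')) * M := by
          rw [hMdef, tsum_mul_right]
          ring
  have hγ2 : (0 : ℝ) < (N : ℝ) / (2 * p) - (N : ℝ) / (4 * c') := by
    rw [hc'def]
    rw [sub_pos, div_lt_div_iff₀ (by nlinarith) (by nlinarith)]
    nlinarith [mul_pos hN0 (mul_pos hp (sub_pos.mpr ha))]
  have hDint : Integrable (fun y : ℝ =>
      (M ^ N * Real.exp (((N : ℝ) / (4 * c')) * μ ^ 2)) *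
        Real.exp (-((N : ℝ) / (2 * p) - (N : ℝ) / (4 * c')) * y ^ 2 +
          (2 * ((N : ℝ) / (4 * c')) * μ) * y)) :=
    (gauss_integrable hγ2 _).const_mul _
  have hbound : ∀ y : ℝ, Real.exp (N * E υ a y p μ)
      ≤ (M ^ N * Real.exp (((N : ℝ) / (4 * c')) * μ ^ 2)) *
          Real.exp (-((N : ℝ) / (2 * p) - (N : ℝ) / (4 * c')) * y ^ 2 +
            (2 * ((N : ℝ) / (4 * c')) * μ) * y) := by
    intro y
    rw [hNE y]
    calc Real.exp (-((N : ℝ) / (2 * p)) * y ^ 2) * (K υ a y p μ) ^ N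
        ≤ Real.exp (-((N : ℝ) / (2 * p)) * y ^ 2) *
            (Real.exp ((y + μ) ^ 2 / (4 * c')) * M) ^ N := by
          apply mul_le_mul_of_nonneg_left _ (Real.exp_nonneg _)
          exact pow_le_pow_left₀ (le_of_lt (hKpos y)) (hKle y) N
      _ = (M ^ N * Real.exp (((N : ℝ) / (4 * c')) * μ ^ 2)) *
          Real.exp (-((N : ℝ) / (2 * p) - (N : ℝ) / (4 * c')) * y ^ 2 +
            (2 * ((N : ℝ) / (4 * c')) * μ) * y) := by
          have key : ∀ x z : ℝ, Real.exp x * (Real.exp z * M) ^ N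
              = M ^ N * Real.exp (x + (N : ℝ) * z) := by
            intro x z
            rw [mul_pow, ← Real.exp_nat_mul, Real.exp_add]
            ring
          rw [key, mul_assoc, ← Real.exp_add]
          congr 1
          congr 1
          ring
  have hint : Integrable (fun y : ℝ => Real.exp (N * E υ a y p μ)) := by
    apply hDint.mono' hEm.aestronglyMeasurable
    filter_upwards with y
    rw [Real.norm_of_nonneg (Real.exp_nonneg _)]
    exact hbound y
  refine ⟨hint, ?_⟩
  -- final computation
  have hInt_eq : (∫ y : ℝ, Real.exp (N * E υ a y p μ))
      = Real.sqrt (π / ((N : ℝ) / (2 * p))) * Xi υ a N p μ := by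
    have h1 : (∫ y : ℝ, Real.exp (N * E υ a y p μ))
        = ∫ y : ℝ, ∑' ρ : Fin N → ℕ, (∏ ℓ, ppi υ a p μ (ρ ℓ)) *
            Real.exp (-((N : ℝ) / (2 * p)) * y ^ 2 + (∑ ℓ, (ρ ℓ : ℝ)) * y) := by
      congr 1
      funext y
      exact hNE2 y
    rw [h1, ← hswap]
    unfold Xi
    rw [← tsum_mul_left]
    exact tsum_congr fun ρ => hFval ρ
  rw [hInt_eq, ← mul_assoc]
  have hsqrt : Real.sqrt ((N : ℝ) / (2 * Real.pi * p)) *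
      Real.sqrt (π / ((N : ℝ) / (2 * p))) = 1 := by
    rw [← Real.sqrt_mul (by positivity)]
    rw [show (N : ℝ) / (2 * Real.pi * p) * (π / ((N : ℝ) / (2 * p))) = 1 by
      field_simp]
    exact Real.sqrt_one
  rw [hsqrt, one_mul]
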